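/- Consider the reduced single-slot MCSP instance built from a monotone 3-SAT formula F with N clauses and M variables (with content size s > 0, AoI cost f > 0, user download cost α and server update cost β satisfying α > β > 0). Then the total cost of every caching decision is at least M·β·s + 2·M·f + M·α·s + N·f, and this lower bound is attained by some caching decision if and only if the formula F is satisfiable. -/

import Mathlib

/-- The two contents A and B of the reduction. -/
inductive Content : Type
  | A : Content
  | B : Content
  deriving DecidableEq

instance instFintypeContent : Fintype Content :=
  ⟨{Content.A, Content.B}, fun x => by cases x <;> simp⟩

/-- A monotone 3-SAT clause over variables `v₁,…,v_M` (indexed by `Fin M`):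
a nonempty set of at most three variables, all negated (`pos = false`, a negative
clause) or all non-negated (`pos = true`, a positive clause). -/
structure MClause (M : ℕ) : Type where
  pos : Bool
  vars : Finset (Fin M)
  nonempty : vars.Nonempty
  card_le : vars.card ≤ 3

/-- The content requested by the primary request of a clause: `A` for a negative
clause, `B` for a positive clause. -/
def reqContent {M : ℕ} (C : MClause M) : Content :=
  if C.pos then Content.B else Content.A

open Classical in
/-- Total cost of the caching decision `σ` in the reduced single-slot MCSP instance
built from the monotone 3-SAT formula `F` (with `M` cache servers, one per variable,
and `N` primary requests, one per clause):
* each cached content incurs update cost `β·s`;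
* each of the two auxiliary single-choice requests of each server (one for `A`, one
  for `B`, candidate = that server only) incurs AoI cost `f` if its content is cached
  there, and cloud cost `f + α·s` otherwise;
* the primary request of clause `C_k` (for content `reqContent (F k)`, candidates =
  the servers of the variables of `C_k`) incurs `f` if some candidate server caches
  the requested content, and `f + α·s` otherwise. -/
noncomputable def totalCost (M N : ℕ) (s f α β : ℝ)
    (F : Fin N → MClause M) (σ : Fin M → Finset Content) : ℝ :=
  (∑ h : Fin M, ((σ h).card : ℝ) * (β * s))
    + (∑ h : Fin M, ∑ c : Content, if c ∈ σ h then f else f + α * s)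
    + (∑ k : Fin N, if ∃ v ∈ (F k).vars, reqContent (F k) ∈ σ v then f else f + α * s)

/-- The clause `C` is true under the Boolean assignment `a`: a positive clause is true
iff some of its variables is true, a negative clause is true iff some of its variables
is false. -/
def clauseSat {M : ℕ} (a : Fin M → Bool) (C : MClause M) : Prop :=
  ∃ v ∈ C.vars, a v = C.pos


open Finset in
private lemma sum_content (g : Content → ℝ) :
    ∑ c : Content, g c = g Content.A + g Content.B := by
  have h : (Finset.univ : Finset Content) = {Content.A, Content.B} := by decide
  rw [h, Finset.sum_pair (by decide)]

private lemma finset_content_cases (S : Finset Content) :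
    S = ∅ ∨ S = {Content.A} ∨ S = {Content.B} ∨ S = {Content.A, Content.B} := by
  revert S; decide

/-- In the reduced single-slot MCSP instance built from a monotone
3-SAT formula `F` with `N` clauses and `M` variables (content size `s > 0`, AoI cost
`f > 0`, user download cost `α` and server update cost `β` with `α > β > 0`):
the total cost of every caching decision (each server caching a set of contents of
total size at most `s`) is at least `M·β·s + 2·M·f + M·α·s + N·f`, and this lower
bound is attained by some caching decision if and only if `F` is satisfiable. -/
theorem stmt_6 (M N : ℕ) (s f α β : ℝ)
    (hs : 0 < s) (hf : 0 < f) (hβ : 0 < β) (hαβ : β < α)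
    (F : Fin N → MClause M) :
    (∀ σ : Fin M → Finset Content, (∀ h : Fin M, ((σ h).card : ℝ) * s ≤ s) →
      M * β * s + 2 * M * f + M * α * s + N * f ≤ totalCost M N s f α β F σ) ∧
    ((∃ σ : Fin M → Finset Content, (∀ h : Fin M, ((σ h).card : ℝ) * s ≤ s) ∧
        totalCost M N s f α β F σ = M * β * s + 2 * M * f + M * α * s + N * f) ↔
      (∃ a : Fin M → Bool, ∀ k : Fin N, clauseSat a (F k))) := by
  classical
  have hα : 0 < α := hβ.trans hαβ
  have hαs : 0 < α * s := mul_pos hα hs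
  have hβs : 0 < β * s := mul_pos hβ hs
  have hne : β * s ≠ α * s := ne_of_lt (mul_lt_mul_of_pos_right hαβ hs)
  set L : ℝ := β * s + 2 * f + α * s with hLdef
  -- per-server analysis
  have key : ∀ S : Finset Content, (S.card : ℝ) * s ≤ s →
      (L ≤ (S.card : ℝ) * (β * s) + ∑ c : Content, (if c ∈ S then f else f + α * s)
       ∧ (((S.card : ℝ) * (β * s) + ∑ c : Content, (if c ∈ S then f else f + α * s) = L)
            ↔ S.card = 1)) := by
    intro S hS
    have hcard : S.card ≤ 1 := by
      by_contra hc
      push_neg at hc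
      have h2 : (2 : ℝ) ≤ (S.card : ℝ) := by exact_mod_cast hc
      nlinarith
    rcases finset_content_cases S with rfl | rfl | rfl | rfl
    · rw [sum_content]
      simp only [Finset.notMem_empty, if_false, Finset.card_empty, Nat.cast_zero]
      constructor
      · nlinarith
      · constructor
        · intro h; exfalso; apply hne; linarith
        · intro h; exact absurd h (by norm_num)
    · rw [sum_content]
      simp only [Finset.mem_singleton, if_true, Finset.card_singleton, Nat.cast_one,
        reduceCtorEq, if_false, if_pos rfl]
      constructor
      · nlinarith
      · constructor
        · intro _; trivial
        · intro _; rw [hLdef]; ring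
    · rw [sum_content]
      simp only [Finset.mem_singleton, if_true, Finset.card_singleton, Nat.cast_one,
        reduceCtorEq, if_false, if_pos rfl]
      constructor
      · nlinarith
      · constructor
        · intro _; trivial
        · intro _; rw [hLdef]; ring
    · exfalso
      have : ({Content.A, Content.B} : Finset Content).card = 2 := by decide
      omega
  -- split total cost
  have hsplit : ∀ σ : Fin M → Finset Content,
      totalCost M N s f α β F σ =
        (∑ h : Fin M, (((σ h).card : ℝ) * (β * s)
            + ∑ c : Content, (if c ∈ σ h then f else f + α * s)))
        + (∑ k : Fin N, if ∃ v ∈ (F k).vars, reqContent (F k) ∈ σ v then f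
            else f + α * s) := by
    intro σ
    rw [totalCost, Finset.sum_add_distrib]
  have hbound : M * β * s + 2 * M * f + M * α * s + N * f
      = (M : ℝ) * L + (N : ℝ) * f := by
    simp only [hLdef]; ring
  have hQge : ∀ (σ : Fin M → Finset Content) (k : Fin N),
      f ≤ (if ∃ v ∈ (F k).vars, reqContent (F k) ∈ σ v then f else f + α * s) := by
    intro σ k
    split <;> nlinarith
  constructor
  · intro σ hσ
    rw [hsplit, hbound]
    have h1 : (M : ℝ) * L ≤ ∑ h : Fin M, (((σ h).card : ℝ) * (β * s)
        + ∑ c : Content, (if c ∈ σ h then f else f + α * s)) := by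
      calc (M : ℝ) * L = ∑ _h : Fin M, L := by
            rw [Finset.sum_const, Finset.card_univ, Fintype.card_fin, nsmul_eq_mul]
        _ ≤ _ := Finset.sum_le_sum (fun h _ => (key (σ h) (hσ h)).1)
    have h2 : (N : ℝ) * f ≤ ∑ k : Fin N,
        (if ∃ v ∈ (F k).vars, reqContent (F k) ∈ σ v then f else f + α * s) := by
      calc (N : ℝ) * f = ∑ _k : Fin N, f := by
            rw [Finset.sum_const, Finset.card_univ, Fintype.card_fin, nsmul_eq_mul]
        _ ≤ _ := Finset.sum_le_sum (fun k _ => hQge σ k)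
    linarith
  constructor
  · rintro ⟨σ, hσ, heq⟩
    rw [hsplit, hbound] at heq
    have h1 : (M : ℝ) * L ≤ ∑ h : Fin M, (((σ h).card : ℝ) * (β * s)
        + ∑ c : Content, (if c ∈ σ h then f else f + α * s)) := by
      calc (M : ℝ) * L = ∑ _h : Fin M, L := by
            rw [Finset.sum_const, Finset.card_univ, Fintype.card_fin, nsmul_eq_mul]
        _ ≤ _ := Finset.sum_le_sum (fun h _ => (key (σ h) (hσ h)).1)
    have h2 : (N : ℝ) * f ≤ ∑ k : Fin N,
        (if ∃ v ∈ (F k).vars, reqContent (F k) ∈ σ v then f else f + α * s) := by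
      calc (N : ℝ) * f = ∑ _k : Fin N, f := by
            rw [Finset.sum_const, Finset.card_univ, Fintype.card_fin, nsmul_eq_mul]
        _ ≤ _ := Finset.sum_le_sum (fun k _ => hQge σ k)
    have hQeq : ∑ k : Fin N,
        (if ∃ v ∈ (F k).vars, reqContent (F k) ∈ σ v then f else f + α * s)
        = ∑ _k : Fin N, f := by
      have hMc : (M : ℝ) * L = ∑ h : Fin M, (((σ h).card : ℝ) * (β * s)
          + ∑ c : Content, (if c ∈ σ h then f else f + α * s)) := by linarith
      have : (N : ℝ) * f = ∑ k : Fin N,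
          (if ∃ v ∈ (F k).vars, reqContent (F k) ∈ σ v then f else f + α * s) := by
        linarith
      rw [← this, Finset.sum_const, Finset.card_univ, Fintype.card_fin, nsmul_eq_mul]
    have hPeq : ∑ h : Fin M, (((σ h).card : ℝ) * (β * s)
        + ∑ c : Content, (if c ∈ σ h then f else f + α * s)) = ∑ _h : Fin M, L := by
      have : (M : ℝ) * L = ∑ h : Fin M, (((σ h).card : ℝ) * (β * s)
          + ∑ c : Content, (if c ∈ σ h then f else f + α * s)) := by linarith
      rw [← this, Finset.sum_const, Finset.card_univ, Fintype.card_fin, nsmul_eq_mul]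
    -- termwise equalities
    have hPterm : ∀ h : Fin M, (σ h).card = 1 := by
      have := (Finset.sum_eq_sum_iff_of_le
        (f := fun _ : Fin M => L)
        (g := fun h : Fin M => ((σ h).card : ℝ) * (β * s)
          + ∑ c : Content, (if c ∈ σ h then f else f + α * s))
        (fun h _ => (key (σ h) (hσ h)).1)).mp hPeq.symm
      intro h
      exact ((key (σ h) (hσ h)).2).mp (this h (Finset.mem_univ h)).symm
    have hQterm : ∀ k : Fin N, ∃ v ∈ (F k).vars, reqContent (F k) ∈ σ v := by
      have := (Finset.sum_eq_sum_iff_of_le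
        (f := fun _ : Fin N => f)
        (g := fun k : Fin N => if ∃ v ∈ (F k).vars, reqContent (F k) ∈ σ v then f
          else f + α * s)
        (fun k _ => hQge σ k)).mp hQeq.symm
      intro k
      have hk := (this k (Finset.mem_univ k)).symm
      by_contra hc
      rw [if_neg hc] at hk
      nlinarith
    refine ⟨fun v => decide (Content.B ∈ σ v), fun k => ?_⟩
    obtain ⟨v, hv, hmem⟩ := hQterm k
    have hone := hPterm v
    have hcases : σ v = {Content.A} ∨ σ v = {Content.B} := by
      rcases finset_content_cases (σ v) with h | h | h | h
      · rw [h] at hone; simp at hone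
      · exact Or.inl h
      · exact Or.inr h
      · rw [h] at hone; exact absurd hone (by decide)
    refine ⟨v, hv, ?_⟩
    rw [reqContent] at hmem
    cases hp : (F k).pos
    · rw [hp, if_neg (by simp)] at hmem
      rcases hcases with h | h
      · simp [h]
      · rw [h] at hmem; exact absurd hmem (by decide)
    · rw [hp, if_pos rfl] at hmem
      simp [hmem]
  · rintro ⟨a, ha⟩
    refine ⟨fun v => if a v then {Content.B} else {Content.A}, ?_, ?_⟩
    · intro h
      by_cases hah : a h <;> simp [hah]
    · rw [hsplit, hbound]
      have hcard : ∀ h : Fin M,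
          ((if a h then ({Content.B} : Finset Content) else {Content.A}).card : ℝ)
            = 1 := by
        intro h; split <;> simp
      have haux : ∀ h : Fin M,
          (∑ c : Content, (if c ∈ (if a h then ({Content.B} : Finset Content)
            else {Content.A}) then f else f + α * s)) = 2 * f + α * s := by
        intro h
        rw [sum_content]
        by_cases hah : a h <;> simp [hah] <;> ring
      have hP : (∑ h : Fin M,
          (((if a h then ({Content.B} : Finset Content) else {Content.A}).card : ℝ)
              * (β * s)
            + ∑ c : Content, (if c ∈ (if a h then ({Content.B} : Finset Content)
              else {Content.A}) then f else f + α * s))) = (M : ℝ) * L := by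
        have : ∀ h : Fin M,
            (((if a h then ({Content.B} : Finset Content) else {Content.A}).card : ℝ)
                * (β * s)
              + ∑ c : Content, (if c ∈ (if a h then ({Content.B} : Finset Content)
                else {Content.A}) then f else f + α * s)) = L := by
          intro h
          rw [hcard h, haux h, hLdef]; ring
        rw [Finset.sum_congr rfl (fun h _ => this h), Finset.sum_const,
          Finset.card_univ, Fintype.card_fin, nsmul_eq_mul]
      have hQ : (∑ k : Fin N, if ∃ v ∈ (F k).vars, reqContent (F k)
          ∈ (if a v then ({Content.B} : Finset Content) else {Content.A}) then f
          else f + α * s) = (N : ℝ) * f := by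
        have : ∀ k : Fin N, ∃ v ∈ (F k).vars, reqContent (F k)
            ∈ (if a v then ({Content.B} : Finset Content) else {Content.A}) := by
          intro k
          obtain ⟨v, hv, hav⟩ := ha k
          refine ⟨v, hv, ?_⟩
          rw [reqContent]
          cases hp : (F k).pos
          · rw [hp] at hav
            simp [hav]
          · rw [hp] at hav
            simp [hav]
        rw [Finset.sum_congr rfl (fun k _ => if_pos (this k)), Finset.sum_const,
          Finset.card_univ, Fintype.card_fin, nsmul_eq_mul]
      rw [hP, hQ]
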